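/- The fiber product ring K[x,y] ×_{K[x]} K[t], where K[x,y] → K[x] is the quotient by (y) and K[t] → K[x] sends t to x², is isomorphic as a K-algebra to K[u,v,w]/(u² − v²w), via u ↦ (xy, 0), v ↦ (y, 0), w ↦ (x², t). -/

import Mathlib

/-- The `K`-algebra map `K[u,v,w] → K[x,y] × K[t]` with
`u ↦ (xy, 0)`, `v ↦ (y, 0)`, `w ↦ (x², t)`. -/
noncomputable def phi3 (K : Type*) [Field K] :
    MvPolynomial (Fin 3) K →ₐ[K] MvPolynomial (Fin 2) K × Polynomial K :=
  MvPolynomial.aeval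
    ![(MvPolynomial.X 0 * MvPolynomial.X 1, 0),
      (MvPolynomial.X 1, 0),
      (MvPolynomial.X 0 ^ 2, Polynomial.X)]

open MvPolynomial

namespace Stmt3Aux

variable (K : Type*) [Field K]

/-- `K[a,b] → K[u,v,w]`, `a ↦ w = X 2`, `b ↦ v = X 1`. -/
noncomputable def rr : MvPolynomial (Fin 2) K →ₐ[K] MvPolynomial (Fin 3) K :=
  aeval ![X 2, X 1]

/-- `K[a,b] → K[x,y]`, `a ↦ x² = X 0 ^ 2`, `b ↦ y = X 1`. -/
noncomputable def AA : MvPolynomial (Fin 2) K →ₐ[K] MvPolynomial (Fin 2) K :=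
  aeval ![X 0 ^ 2, X 1]

variable {K}

/-- even/odd coefficient argument. -/
lemma key {R : Type*} [CommRing R] [IsDomain R] {r : R} (hr : r ≠ 0)
    {P Q : Polynomial R}
    (h : Polynomial.expand R 2 P + Polynomial.X * Polynomial.C r * Polynomial.expand R 2 Q = 0) :
    P = 0 ∧ Q = 0 := by
  have hP : P = 0 := by
    ext k
    have hc := congrArg (fun s => Polynomial.coeff s (2 * k)) h
    simp only [Polynomial.coeff_add, Polynomial.coeff_zero] at hc
    rw [Polynomial.coeff_expand_mul' (by norm_num)] at hc
    have hz : (Polynomial.X * Polynomial.C r * Polynomial.expand R 2 Q).coeff (2 * k) = 0 := by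
      rw [mul_assoc]
      cases k with
      | zero => simp
      | succ j =>
        have h2 : 2 * (j + 1) = (2 * j + 1) + 1 := by ring
        rw [h2, Polynomial.coeff_X_mul, Polynomial.coeff_C_mul,
          Polynomial.coeff_expand (by norm_num)]
        have hnd : ¬ (2 ∣ 2 * j + 1) := by omega
        simp [hnd]
    rw [hz] at hc
    simpa using hc
  rw [hP, map_zero, zero_add] at h
  refine ⟨hP, ?_⟩
  rcases mul_eq_zero.mp h with h' | h'
  · rcases mul_eq_zero.mp h' with h'' | h''
    · exact absurd h'' Polynomial.X_ne_zero
    · exact absurd (Polynomial.C_eq_zero.mp h'') hr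
  · exact (Polynomial.expand_eq_zero (by norm_num)).mp h'

lemma decomp (P : MvPolynomial (Fin 3) K) :
    ∃ p q : MvPolynomial (Fin 2) K,
      P - (rr K p + X 0 * rr K q) ∈
        Ideal.span {(X 0 ^ 2 - X 1 ^ 2 * X 2 : MvPolynomial (Fin 3) K)} := by
  set I := Ideal.span {(X 0 ^ 2 - X 1 ^ 2 * X 2 : MvPolynomial (Fin 3) K)} with hI
  have hg : (X 0 ^ 2 - X 1 ^ 2 * X 2 : MvPolynomial (Fin 3) K) ∈ I :=
    Ideal.subset_span rfl
  induction P using MvPolynomial.induction_on with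
  | C a =>
    refine ⟨C a, 0, ?_⟩
    have e : (C a : MvPolynomial (Fin 3) K) - (rr K (C a) + X 0 * rr K 0) = 0 := by
      simp [rr]
    rw [e]; exact I.zero_mem
  | add p q hp hq =>
    obtain ⟨p1, q1, h1⟩ := hp
    obtain ⟨p2, q2, h2⟩ := hq
    refine ⟨p1 + p2, q1 + q2, ?_⟩
    have e : p + q - (rr K (p1 + p2) + X 0 * rr K (q1 + q2))
        = (p - (rr K p1 + X 0 * rr K q1)) + (q - (rr K p2 + X 0 * rr K q2)) := by
      rw [map_add, map_add]; ring
    rw [e]; exact I.add_mem h1 h2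
  | mul_X p i hp =>
    obtain ⟨p1, q1, h1⟩ := hp
    fin_cases i <;> (beta_reduce; simp only [Fin.zero_eta, Fin.mk_one, Fin.reduceFinMk])
    · refine ⟨X 1 ^ 2 * X 0 * q1, p1, ?_⟩
      have e : p * X 0 - (rr K (X 1 ^ 2 * X 0 * q1) + X 0 * rr K p1)
          = (p - (rr K p1 + X 0 * rr K q1)) * X 0
            + (X 0 ^ 2 - X 1 ^ 2 * X 2) * rr K q1 := by
        simp only [rr, map_mul, map_pow, aeval_X, Matrix.cons_val_zero, Matrix.cons_val_one,
          Matrix.head_cons]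
        ring
      rw [e]
      exact I.add_mem (Ideal.mul_mem_right _ _ h1) (Ideal.mul_mem_right _ _ hg)
    · refine ⟨X 1 * p1, X 1 * q1, ?_⟩
      have e : p * X 1 - (rr K (X 1 * p1) + X 0 * rr K (X 1 * q1))
          = (p - (rr K p1 + X 0 * rr K q1)) * X 1 := by
        simp only [rr, map_mul, aeval_X, Matrix.cons_val_zero, Matrix.cons_val_one,
          Matrix.head_cons]
        ring
      rw [e]
      exact Ideal.mul_mem_right _ _ h1
    · refine ⟨X 0 * p1, X 0 * q1, ?_⟩
      have e : p * X 2 - (rr K (X 0 * p1) + X 0 * rr K (X 0 * q1))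
          = (p - (rr K p1 + X 0 * rr K q1)) * X 2 := by
        simp only [rr, map_mul, aeval_X, Matrix.cons_val_zero, Matrix.cons_val_one,
          Matrix.head_cons]
        ring
      rw [e]
      exact Ideal.mul_mem_right _ _ h1

lemma eA : (MvPolynomial.finSuccEquiv K 1).toAlgHom.comp (AA K)
    = ((Polynomial.expand (MvPolynomial (Fin 1) K) 2).restrictScalars K).comp
        (MvPolynomial.finSuccEquiv K 1).toAlgHom := by
  apply MvPolynomial.algHom_ext
  intro i
  fin_cases i
  · simp [AA, MvPolynomial.finSuccEquiv_X_zero]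
  · have hX1 : MvPolynomial.finSuccEquiv K 1 (X 1) = Polynomial.C (X 0) := by
      have h1 : (X 1 : MvPolynomial (Fin 2) K) = X (Fin.succ 0) := rfl
      rw [h1, MvPolynomial.finSuccEquiv_X_succ]
    simp [AA, hX1, Polynomial.expand_C]

lemma phi3_rr : (phi3 K).comp (rr K)
    = (AA K).prod (aeval ![Polynomial.X, (0 : Polynomial K)]) := by
  apply MvPolynomial.algHom_ext
  intro i
  fin_cases i <;> simp [phi3, rr, AA]

set_option maxRecDepth 4000 in
lemma phi3_gen_zero :
    phi3 K ((X 0 : MvPolynomial (Fin 3) K) ^ 2 - X 1 ^ 2 * X 2) = 0 := by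
  rw [map_sub, map_pow, map_mul, map_pow]
  simp only [phi3, aeval_X, Matrix.cons_val_zero, Matrix.cons_val_one, Matrix.head_cons,
    Matrix.cons_val_two, Matrix.tail_cons]
  rw [Prod.ext_iff]
  constructor <;> simp <;> ring

end Stmt3Aux

open Stmt3Aux in
theorem stmt_3 (K : Type*) [Field K] :
    RingHom.ker (phi3 K) =
      Ideal.span {MvPolynomial.X 0 ^ 2 - MvPolynomial.X 1 ^ 2 * MvPolynomial.X 2} ∧
    Set.range (phi3 K) =
      {fg : MvPolynomial (Fin 2) K × Polynomial K |
        MvPolynomial.aeval ![Polynomial.X, (0 : Polynomial K)] fg.1 =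
          Polynomial.aeval (Polynomial.X ^ 2 : Polynomial K) fg.2} := by
  have hker : Ideal.span {(X 0 ^ 2 - X 1 ^ 2 * X 2 : MvPolynomial (Fin 3) K)}
      ≤ RingHom.ker (phi3 K) := by
    rw [Ideal.span_le, Set.singleton_subset_iff]
    exact phi3_gen_zero
  constructor
  · apply le_antisymm ?_ hker
    intro P hP
    rw [RingHom.mem_ker] at hP
    obtain ⟨p, q, hpq⟩ := decomp P
    have hs : phi3 K (rr K p + X 0 * rr K q) = 0 := by
      have h1 : phi3 K (P - (rr K p + X 0 * rr K q)) = 0 := hker hpq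
      rw [map_sub, hP, zero_sub, neg_eq_zero] at h1
      exact h1
    have hX0 : phi3 K (X 0 : MvPolynomial (Fin 3) K) = (X 0 * X 1, 0) := by
      simp [phi3]
    have hrrp := AlgHom.congr_fun (phi3_rr (K := K)) p
    have hrrq := AlgHom.congr_fun (phi3_rr (K := K)) q
    simp only [AlgHom.comp_apply, AlgHom.prod_apply] at hrrp hrrq
    rw [map_add, map_mul, hrrp, hrrq, hX0, Prod.mk_mul_mk, Prod.mk_add_mk] at hs
    have hfirst : AA K p + X 0 * X 1 * AA K q = 0 := congrArg Prod.fst hs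
    have h3 := congrArg (MvPolynomial.finSuccEquiv K 1) hfirst
    have heAp := AlgHom.congr_fun (eA (K := K)) p
    have heAq := AlgHom.congr_fun (eA (K := K)) q
    simp only [AlgHom.comp_apply, AlgEquiv.toAlgHom_eq_coe, AlgHom.coe_coe,
      AlgHom.coe_restrictScalars', AlgEquiv.coe_algHom] at heAp heAq
    have h1 : (1 : Fin 2) = Fin.succ 0 := rfl
    rw [map_add, map_mul, map_mul, map_zero, heAp, heAq,
      MvPolynomial.finSuccEquiv_X_zero, h1, MvPolynomial.finSuccEquiv_X_succ] at h3
    obtain ⟨hp0, hq0⟩ := key (MvPolynomial.X_ne_zero (0 : Fin 1)) h3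
    have hp : p = 0 := (MvPolynomial.finSuccEquiv K 1).injective (by rw [hp0, map_zero])
    have hq : q = 0 := (MvPolynomial.finSuccEquiv K 1).injective (by rw [hq0, map_zero])
    rw [hp, hq] at hpq
    simpa using hpq
  · ext fg
    obtain ⟨f, g⟩ := fg
    simp only [Set.mem_setOf_eq]
    constructor
    · rintro ⟨P, hP⟩
      have h : ((aeval ![Polynomial.X, (0 : Polynomial K)]).comp
            ((AlgHom.fst K (MvPolynomial (Fin 2) K) (Polynomial K)).comp (phi3 K)))
          = (Polynomial.aeval (Polynomial.X ^ 2 : Polynomial K)).comp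
            ((AlgHom.snd K (MvPolynomial (Fin 2) K) (Polynomial K)).comp (phi3 K)) := by
        apply MvPolynomial.algHom_ext
        intro i
        fin_cases i
        · simp only [AlgHom.comp_apply]
          show (aeval ![Polynomial.X, (0 : Polynomial K)]) (((phi3 K) (X 0)).1)
              = (Polynomial.aeval (Polynomial.X ^ 2 : Polynomial K)) (((phi3 K) (X 0)).2)
          simp [phi3]
        · simp only [AlgHom.comp_apply]
          show (aeval ![Polynomial.X, (0 : Polynomial K)]) (((phi3 K) (X 1)).1)
              = (Polynomial.aeval (Polynomial.X ^ 2 : Polynomial K)) (((phi3 K) (X 1)).2)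
          simp [phi3]
        · simp only [AlgHom.comp_apply]
          show (aeval ![Polynomial.X, (0 : Polynomial K)]) (((phi3 K) (X 2)).1)
              = (Polynomial.aeval (Polynomial.X ^ 2 : Polynomial K)) (((phi3 K) (X 2)).2)
          simp [phi3]
      have hf : f = (phi3 K P).1 := by rw [hP]
      have hgg : g = (phi3 K P).2 := by rw [hP]
      rw [hf, hgg]
      exact AlgHom.congr_fun h P
    · intro hfg
      -- the subalgebra point of view
      have hT : Set.range (phi3 K) = ((phi3 K).range : Subalgebra K _) := by
        rw [AlgHom.coe_range]
      rw [hT]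
      set T := (phi3 K).range with hTdef
      have hu : ((X 0 * X 1, 0) : MvPolynomial (Fin 2) K × Polynomial K) ∈ T :=
        ⟨X 0, by simp [phi3]⟩
      have hv : ((X 1, 0) : MvPolynomial (Fin 2) K × Polynomial K) ∈ T :=
        ⟨X 1, by simp [phi3]⟩
      have hw : ((X 0 ^ 2, Polynomial.X) : MvPolynomial (Fin 2) K × Polynomial K) ∈ T :=
        ⟨X 2, by simp [phi3]⟩
      -- every (y*h, 0) and (x*y*h, 0) is in T
      have hyh : ∀ h : MvPolynomial (Fin 2) K,
          ((X 1 * h, 0) : MvPolynomial (Fin 2) K × Polynomial K) ∈ T ∧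
          ((X 0 * X 1 * h, 0) : MvPolynomial (Fin 2) K × Polynomial K) ∈ T := by
        intro h
        induction h using MvPolynomial.induction_on with
        | C a =>
          constructor
          · have := T.smul_mem hv a
            rw [Prod.smul_mk, smul_zero, MvPolynomial.smul_eq_C_mul, mul_comm] at this
            exact this
          · have := T.smul_mem hu a
            rw [Prod.smul_mk, smul_zero, MvPolynomial.smul_eq_C_mul, mul_comm] at this
            exact this
        | add p q hp hq =>
          constructor
          · have := T.add_mem hp.1 hq.1
            rw [Prod.mk_add_mk, add_zero, ← mul_add] at this
            exact this
          · have := T.add_mem hp.2 hq.2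
            rw [Prod.mk_add_mk, add_zero, ← mul_add] at this
            exact this
        | mul_X p i hp =>
          fin_cases i <;> (beta_reduce; simp only [Fin.zero_eta, Fin.mk_one, Fin.reduceFinMk])
          · constructor
            · have e : ((X 1 * (p * X 0), 0) : MvPolynomial (Fin 2) K × Polynomial K)
                  = (X 0 * X 1 * p, 0) := by
                rw [show (X 1 : MvPolynomial (Fin 2) K) * (p * X 0) = X 0 * X 1 * p from by ring]
              rw [e]; exact hp.2
            · have e : ((X 0 ^ 2, Polynomial.X) : MvPolynomial (Fin 2) K × Polynomial K)
                  * (X 1 * p, 0) = (X 0 * X 1 * (p * X 0), 0) := by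
                rw [Prod.mk_mul_mk, mul_zero,
                  show (X 0 : MvPolynomial (Fin 2) K) ^ 2 * (X 1 * p) = X 0 * X 1 * (p * X 0)
                    from by ring]
              rw [← e]; exact T.mul_mem hw hp.1
          · constructor
            · have e : ((X 1, 0) : MvPolynomial (Fin 2) K × Polynomial K) * (X 1 * p, 0)
                  = (X 1 * (p * X 1), 0) := by
                rw [Prod.mk_mul_mk, mul_zero,
                  show (X 1 : MvPolynomial (Fin 2) K) * (X 1 * p) = X 1 * (p * X 1) from by ring]
              rw [← e]; exact T.mul_mem hv hp.1
            · have e : ((X 1, 0) : MvPolynomial (Fin 2) K × Polynomial K) * (X 0 * X 1 * p, 0)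
                  = (X 0 * X 1 * (p * X 1), 0) := by
                rw [Prod.mk_mul_mk, mul_zero,
                  show (X 1 : MvPolynomial (Fin 2) K) * (X 0 * X 1 * p)
                    = X 0 * X 1 * (p * X 1) from by ring]
              rw [← e]; exact T.mul_mem hv hp.2
      -- y divides f - lift (f at y=0)
      have hdvd : ∀ f : MvPolynomial (Fin 2) K, (X 1 : MvPolynomial (Fin 2) K) ∣
          f - Polynomial.aeval (X 0 : MvPolynomial (Fin 2) K)
            (aeval ![Polynomial.X, (0 : Polynomial K)] f) := by
        intro f
        induction f using MvPolynomial.induction_on with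
        | C a => simp
        | add p q hp hq =>
          have e : p + q
              - Polynomial.aeval (X 0 : MvPolynomial (Fin 2) K)
                (aeval ![Polynomial.X, (0 : Polynomial K)] (p + q))
              = (p - Polynomial.aeval (X 0 : MvPolynomial (Fin 2) K)
                  (aeval ![Polynomial.X, (0 : Polynomial K)] p))
              + (q - Polynomial.aeval (X 0 : MvPolynomial (Fin 2) K)
                  (aeval ![Polynomial.X, (0 : Polynomial K)] q)) := by
            rw [map_add, map_add]; ring
          rw [e]; exact dvd_add hp hq
        | mul_X p i hp =>
          fin_cases i <;> (beta_reduce; simp only [Fin.zero_eta, Fin.mk_one, Fin.reduceFinMk])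
          · have e : p * X 0
                - Polynomial.aeval (X 0 : MvPolynomial (Fin 2) K)
                  (aeval ![Polynomial.X, (0 : Polynomial K)] (p * X 0))
                = (p - Polynomial.aeval (X 0 : MvPolynomial (Fin 2) K)
                    (aeval ![Polynomial.X, (0 : Polynomial K)] p)) * X 0 := by
              rw [map_mul]
              simp only [aeval_X, Matrix.cons_val_zero, map_mul, Polynomial.aeval_X]
              ring
            rw [e]; exact hp.mul_right _
          · have e : p * X 1
                - Polynomial.aeval (X 0 : MvPolynomial (Fin 2) K)
                  (aeval ![Polynomial.X, (0 : Polynomial K)] (p * X 1)) = p * X 1 := by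
              rw [map_mul]
              simp
            rw [e]
            exact dvd_mul_left (X 1) p
      obtain ⟨h0, hh0⟩ := hdvd f
      -- phi3 of (aeval of g at w)
      have hg2 : phi3 K (Polynomial.aeval (X 2 : MvPolynomial (Fin 3) K) g)
          = (Polynomial.aeval ((X 0 : MvPolynomial (Fin 2) K) ^ 2) g, g) := by
        rw [← Polynomial.aeval_algHom_apply (phi3 K) (X 2) g]
        have h2 : phi3 K (X 2) = ((X 0 : MvPolynomial (Fin 2) K) ^ 2, Polynomial.X) := by
          simp [phi3]
        rw [h2]
        refine Prod.ext ?_ ?_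
        · show (AlgHom.fst K (MvPolynomial (Fin 2) K) (Polynomial K))
            (Polynomial.aeval (((X 0 : MvPolynomial (Fin 2) K) ^ 2, Polynomial.X)) g) = _
          rw [← Polynomial.aeval_algHom_apply]
          rfl
        · show (AlgHom.snd K (MvPolynomial (Fin 2) K) (Polynomial K))
            (Polynomial.aeval (((X 0 : MvPolynomial (Fin 2) K) ^ 2, Polynomial.X)) g) = _
          rw [← Polynomial.aeval_algHom_apply]
          show Polynomial.aeval (Polynomial.X : Polynomial K) g = g
          exact Polynomial.aeval_X_left_apply g
      have hlift : Polynomial.aeval (X 0 : MvPolynomial (Fin 2) K)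
            (aeval ![Polynomial.X, (0 : Polynomial K)] f)
          = Polynomial.aeval ((X 0 : MvPolynomial (Fin 2) K) ^ 2) g := by
        rw [hfg, ← Polynomial.aeval_algHom_apply]
        simp
      have hsplit : ((f, g) : MvPolynomial (Fin 2) K × Polynomial K)
          = phi3 K (Polynomial.aeval (X 2 : MvPolynomial (Fin 3) K) g) + (X 1 * h0, 0) := by
        rw [hg2, Prod.mk_add_mk, add_zero]
        refine Prod.ext ?_ rfl
        show f = Polynomial.aeval ((X 0 : MvPolynomial (Fin 2) K) ^ 2) g + X 1 * h0
        rw [← hlift, ← hh0]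
        ring
      rw [hsplit]
      exact T.add_mem ⟨_, rfl⟩ (hyh h0).1
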